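/- A finite simple graph F whose vertex set is a set of distinct positive integers is an increasing forest if and only if F contains no two distinct edges ik and jk with i < k and j < k (i ≠ j). -/

import Mathlib

open SimpleGraph

private lemma chain'_le_getLast {α : Type*} [LinearOrder α] {l : List α}
    (hl : l.Chain' (· < ·)) {x : α} (hx : x ∈ l) (hne : l ≠ []) : x ≤ l.getLast hne := by
  replace hl := List.isChain_iff_pairwise.mp hl
  have hdecomp := List.dropLast_append_getLast hne
  rw [← hdecomp] at hl hx
  rcases List.mem_append.mp hx with h | h
  · have := (List.pairwise_append.mp hl).2.2 x h (l.getLast hne) (by simp)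
    exact this.le
  · simp at h; exact h.le

private lemma aux_chain {V : Type*} [LinearOrder V] {F : SimpleGraph V}
    (H : ∀ i j k : V, i < k → j < k → F.Adj i k → F.Adj j k → i = j)
    {b v : V} (q : F.Walk b v) : ∀ {a : V} (h : F.Adj a b),
      (Walk.cons h q).IsPath → a < b →
      (Walk.cons h q).support.Chain' (· < ·) := by
  induction q with
  | nil => intro a h hp hab; exact List.isChain_pair.mpr hab
  | @cons b c v h2 q2 ih =>
    intro a h hp hab
    have hanotin : a ∉ (Walk.cons h2 q2).support := ((Walk.cons_isPath_iff _ _).mp hp).2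
    have hbc : b < c := by
      by_contra hle
      push_neg at hle
      have hcb : c < b := lt_of_le_of_ne hle h2.ne'
      have hac : a ≠ c := by
        intro hac
        subst hac
        apply hanotin
        rw [Walk.support_cons]
        exact List.mem_cons_of_mem _ q2.start_mem_support
      exact hac (H a c b hab hcb h h2.symm)
    have hchain := ih h2 hp.of_cons hbc
    simp only [Walk.support_cons] at hchain ⊢
    exact List.isChain_cons_cons.mpr ⟨hab, hchain⟩


/-- A simple graph `F` on a linearly ordered vertex type is an *increasing forest*
if it is acyclic and, rooting each connected component at its minimum vertex,
the vertex labels strictly increase along every path starting at a root. -/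
def IsIncreasingForest {V : Type*} [LinearOrder V] (F : SimpleGraph V) : Prop :=
  F.IsAcyclic ∧ ∀ (r v : V), (∀ w, F.Reachable r w → r ≤ w) →
    ∀ p : F.Walk r v, p.IsPath → p.support.Chain' (· < ·)

theorem stmt_0 (V : Finset ℕ) (hpos : ∀ v ∈ V, 0 < v) (F : SimpleGraph {x // x ∈ V}) :
    IsIncreasingForest F ↔
      ¬ ∃ i j k : {x // x ∈ V}, i < k ∧ j < k ∧ i ≠ j ∧ F.Adj i k ∧ F.Adj j k := by
  classical
  constructor
  · rintro ⟨hac, hinc⟩ ⟨i, j, k, hik, hjk, hij, hadji, hadjj⟩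
    set S : Finset {x // x ∈ V} := Finset.univ.filter (fun w => F.Reachable k w) with hS
    have hkS : k ∈ S := by
      simp only [hS, Finset.mem_filter, Finset.mem_univ, true_and]
      exact Reachable.refl k
    set r : {x // x ∈ V} := S.min' ⟨k, hkS⟩ with hr
    have hrS : r ∈ S := S.min'_mem _
    have hkr : F.Reachable k r := by simpa [hS] using hrS
    have hmin : ∀ w, F.Reachable r w → r ≤ w := by
      intro w hw
      refine S.min'_le w ?_
      simp only [hS, Finset.mem_filter, Finset.mem_univ, true_and]
      exact hkr.trans hw
    have key : ∀ x : {x // x ∈ V}, F.Adj x k → x < k →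
        ∃ Q : F.Path k r, Q.1.support.tail.head? = some x := by
      intro x hadj hxk
      have hrx : F.Reachable r x := hkr.symm.trans hadj.symm.reachable
      obtain ⟨P, hP⟩ := (hrx.some.toPath : F.Path r x)
      have hchain := hinc r x hmin P hP
      have hknotin : k ∉ P.support := by
        intro hk
        have := chain'_le_getLast hchain hk (Walk.support_ne_nil P)
        rw [Walk.getLast_support] at this
        exact absurd this (not_le.mpr hxk)
      refine ⟨⟨Walk.cons hadj.symm P.reverse, ?_⟩, ?_⟩
      · exact (Walk.cons_isPath_iff _ _).mpr ⟨hP.reverse, by simpa using hknotin⟩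
      · simp only [Walk.support_cons, List.tail_cons, Walk.support_reverse,
          List.head?_reverse]
        rw [List.getLast?_eq_getLast (Walk.support_ne_nil P), Walk.getLast_support]
    obtain ⟨Qi, hQi⟩ := key i hadji hik
    obtain ⟨Qj, hQj⟩ := key j hadjj hjk
    have : Qi = Qj := hac.path_unique Qi Qj
    rw [this, hQj] at hQi
    exact hij (Option.some_injective _ hQi.symm)
  · intro H
    have H' : ∀ i j k : {x // x ∈ V}, i < k → j < k → F.Adj i k → F.Adj j k → i = j := by
      intro i j k h1 h2 ha hb
      by_contra hne
      exact H ⟨i, j, k, h1, h2, hne, ha, hb⟩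
    constructor
    · intro a C hC
      set T : Finset {x // x ∈ V} := C.support.toFinset with hT
      have hTne : T.Nonempty := ⟨a, by simp [hT]⟩
      set m : {x // x ∈ V} := T.max' hTne with hm
      have hmmem : m ∈ C.support := by
        have := T.max'_mem hTne
        simpa [hT] using this
      have hmax : ∀ x ∈ C.support, x ≤ m := by
        intro x hx
        exact T.le_max' x (by simpa [hT] using hx)
      set C' := C.rotate m hmmem with hC'def
      have hC' : C'.IsCycle := hC.rotate hmmem
      have hmax' : ∀ x ∈ C'.support, x ≤ m := by
        intro x hx
        rw [C'.support_eq_cons] at hx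
        rcases List.mem_cons.mp hx with h | h
        · exact h.le
        · have hperm := Walk.support_rotate C m hmmem
          have : x ∈ C.support.tail := hperm.mem_iff.mp h
          exact hmax x (List.mem_of_mem_tail this)
      have hnotnil : ¬ C'.Nil := by
        rw [Walk.not_nil_iff_lt_length]
        have := hC'.three_le_length
        omega
      obtain ⟨b, hmb, q, hq⟩ := Walk.not_nil_iff.mp hnotnil
      rw [hq] at hC' hmax'
      have hcyc := (Walk.cons_isCycle_iff q hmb).mp hC'
      have hqlen : 0 < q.length := by
        have h3 := hC'.three_le_length
        simp only [Walk.length_cons] at h3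
        omega
      have hqrevnotnil : ¬ q.reverse.Nil := by
        rw [Walk.not_nil_iff_lt_length, Walk.length_reverse]
        exact hqlen
      obtain ⟨c, hmc, q2, hq2⟩ := Walk.not_nil_iff.mp hqrevnotnil
      have hbm : b < m := by
        refine lt_of_le_of_ne ?_ hmb.ne'
        exact hmax' b (by simp [Walk.support_cons, q.start_mem_support])
      have hcm : c < m := by
        refine lt_of_le_of_ne ?_ hmc.ne'
        have hcmem : c ∈ q.support := by
          have : c ∈ q.reverse.support := by
            rw [hq2, Walk.support_cons]
            exact List.mem_cons_of_mem _ q2.start_mem_support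
          simpa using this
        exact hmax' c (by simp [Walk.support_cons, hcmem])
      have hbc : b ≠ c := by
        intro hbc
        subst hbc
        apply hcyc.2
        have : s(m, b) ∈ q.reverse.edges := by
          rw [hq2]; simp [Walk.edges_cons]
        rwa [Walk.edges_reverse, List.mem_reverse] at this
      exact hbc (H' b c m hbm hcm hmb.symm hmc.symm)
    · intro r v hmin p hp
      cases p with
      | nil => exact List.isChain_singleton _
      | cons h q =>
        have hrb : r < _ := lt_of_le_of_ne (hmin _ h.reachable) h.ne
        exact aux_chain H' q h hp hrb
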